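/- For ε > 0 and θ ∈ (1/2,1), the refinement inequality β_T/(1-α_T) ≥ β_O/(1-α_O) (with α_T = (1/2)e^{-εθ/2}, β_T = (1/2)e^{-ε(1-θ)/2}, α_O = 1/(e^ε+1), β_O = 1/2) holds if and only if e^{εθ/2} ≥ (e^ε + 1 + (e^{ε/2}-1)√(e^ε+1)) / (2e^{ε/2}) or e^{εθ/2} ≤ (e^ε + 1 − (e^{ε/2}-1)√(e^ε+1)) / (2e^{ε/2}). -/

import Mathlib

set_option maxHeartbeats 1000000 in
/-- For `ε > 0` and `θ ∈ (1/2,1)`, the first refinement inequality between THE and OUE,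
`β_T/(1-α_T) ≥ β_O/(1-α_O)`, holds iff `e^{εθ/2}` lies outside the open interval
determined by the roots of the associated quadratic. -/
theorem the_oue_first_ineq_iff (ε θ : ℝ) (hε : 0 < ε) (hθ : θ ∈ Set.Ioo (1 / 2 : ℝ) 1) :
    ((1 / 2) * Real.exp (-(ε * (1 - θ)) / 2)) / (1 - (1 / 2) * Real.exp (-(ε * θ) / 2))
        ≥ (1 / 2) / (1 - 1 / (Real.exp ε + 1)) ↔
      Real.exp (ε * θ / 2)
          ≥ (Real.exp ε + 1 + (Real.exp (ε / 2) - 1) * Real.sqrt (Real.exp ε + 1)) /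
              (2 * Real.exp (ε / 2)) ∨
        Real.exp (ε * θ / 2)
          ≤ (Real.exp ε + 1 - (Real.exp (ε / 2) - 1) * Real.sqrt (Real.exp ε + 1)) /
              (2 * Real.exp (ε / 2)) := by
  obtain ⟨hθ1, hθ2⟩ := hθ
  set E := Real.exp (ε / 2) with hE
  set x := Real.exp (ε * θ / 2) with hx
  set s := Real.sqrt (Real.exp ε + 1) with hs
  have hEpos : (0:ℝ) < E := Real.exp_pos _
  have hE1 : (1:ℝ) < E := by
    rw [hE, show (1:ℝ) = Real.exp 0 by simp]
    exact Real.exp_lt_exp.2 (by linarith)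
  have hx1 : (1:ℝ) < x := by
    rw [hx, show (1:ℝ) = Real.exp 0 by simp]
    exact Real.exp_lt_exp.2 (by nlinarith)
  have hA : Real.exp ε = E ^ 2 := by
    rw [hE, ← Real.exp_nat_mul]
    norm_num
    ring_nf
  have hs2 : s ^ 2 = E ^ 2 + 1 := by
    rw [hs, Real.sq_sqrt (by positivity), hA]
  have hspos : 0 < s := by
    rw [hs]; exact Real.sqrt_pos.mpr (by positivity)
  have h1 : Real.exp (-(ε * θ) / 2) = 1 / x := by
    rw [hx, one_div, ← Real.exp_neg]; congr 1; ring
  have h2 : Real.exp (-(ε * (1 - θ)) / 2) = x / E := by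
    rw [hx, hE, ← Real.exp_sub]; congr 1; ring
  have hxpos : (0:ℝ) < x := by linarith
  have hxne : x ≠ 0 := hxpos.ne'
  have hEne : E ≠ 0 := hEpos.ne'
  -- first: equivalence of LHS with the quadratic
  have key : (((1 / 2) * Real.exp (-(ε * (1 - θ)) / 2)) /
        (1 - (1 / 2) * Real.exp (-(ε * θ) / 2)) ≥ (1 / 2) / (1 - 1 / (Real.exp ε + 1)))
      ↔ 0 ≤ 2 * E * x ^ 2 - 2 * (E ^ 2 + 1) * x + (E ^ 2 + 1) := by
    rw [h1, h2, hA]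
    have hd1 : (0:ℝ) < 1 - 1 / 2 * (1 / x) := by
      have : 1 / x < 1 := by rw [div_lt_one hxpos]; exact hx1
      linarith [div_pos one_pos hxpos]
    have hd2 : (0:ℝ) < 1 - 1 / (E ^ 2 + 1) := by
      have : 1 / (E ^ 2 + 1) < 1 := by
        rw [div_lt_one (by positivity)]; nlinarith
      linarith
    rw [ge_iff_le, div_le_div_iff₀ hd2 hd1,
      show (1:ℝ)/2 * (1 - 1/2*(1/x)) = (2*x-1)/(4*x) by field_simp; ring_nf,
      show (1:ℝ)/2*(x/E)*(1 - 1/(E^2+1)) = x*E/(2*(E^2+1)) by field_simp; ring,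
      div_le_div_iff₀ (by positivity) (by positivity)]
    constructor <;> intro h <;> nlinarith [mul_pos hEpos hxpos]
  rw [key]
  -- second: quadratic vs roots
  have h2E : (0:ℝ) < 2 * E := by linarith
  have hEs : 0 ≤ (E - 1) * s := mul_nonneg (by linarith) (le_of_lt hspos)
  constructor
  · intro hQ
    rcases le_or_gt ((E ^ 2 + 1 + (E - 1) * s) / (2 * E)) x with h | h
    · left; rwa [hA, ge_iff_le]
    · right
      rw [lt_div_iff₀ h2E] at h
      rw [hA, le_div_iff₀ h2E]
      nlinarith [hs2, mul_nonneg h2E.le hQ]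
  · intro h
    rcases h with h | h
    · rw [hA, ge_iff_le, div_le_iff₀ h2E] at h
      have H1 : (E^2+1 + (E-1)*s) * (E^2+1 + (E-1)*s) ≤ (x*(2*E)) * (x*(2*E)) :=
        mul_le_mul h h (by nlinarith [sq_nonneg E]) (by positivity)
      have H2 : (E^2+1) * (E^2+1 + (E-1)*s) ≤ (E^2+1) * (x*(2*E)) :=
        mul_le_mul_of_nonneg_left h (by positivity)
      nlinarith [hs2, hEs]
    · rw [hA, le_div_iff₀ h2E] at h
      have hnn : 0 ≤ E^2+1 - (E-1)*s := by nlinarith [hs2, Real.sq_sqrt (show (0:ℝ) ≤ E^2+1 by positivity), Real.sqrt_nonneg (E^2+1)]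
      have H1 : (x*(2*E)) * (x*(2*E)) ≤ (E^2+1 - (E-1)*s) * (E^2+1 - (E-1)*s) :=
        mul_le_mul h h (by positivity) hnn
      have H2 : (E^2+1) * (x*(2*E)) ≤ (E^2+1) * (E^2+1 - (E-1)*s) :=
        mul_le_mul_of_nonneg_left h (by positivity)
      nlinarith [hs2, hEs]
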